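/- Let C̃ = {(x, |x·log|x||) : x ∈ ℝ, x ≠ 0} ∪ {(0,0)} ⊆ ℝ². The map h : ℝ → C̃ defined by h(x) = (x, |x·log|x||) for x ≠ 0 and h(0) = (0,0) is a homeomorphism onto C̃, and h and h⁻¹ are both log-Lipschitz on a neighborhood of the origin; in particular, h is a bi-α-Hölder homeomorphism (ℝ, 0) → (C̃, 0) for every α ∈ (0, 1). -/
import Mathlib


open Metric

open Real

-- |a * (log b - log a)| ≤ b - a for 0 ≤ a ≤ b
lemma l0 {a b : ℝ} (ha : 0 ≤ a) (hab : a ≤ b) : |a * (log b - log a)| ≤ b - a := by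
  rcases eq_or_lt_of_le ha with h|h
  · simp [← h]; linarith
  · have hb : 0 < b := lt_of_lt_of_le h hab
    have hlog : log a ≤ log b := Real.log_le_log (by exact h) hab
    rw [abs_of_nonneg (by nlinarith)]
    have h1 : log b - log a = log (b / a) := (Real.log_div (ne_of_gt hb) (ne_of_gt h)).symm
    have h2 : log (b / a) ≤ b / a - 1 := Real.log_le_sub_one_of_pos (by positivity)
    rw [h1]
    calc a * log (b/a) ≤ a * (b/a - 1) := by nlinarith
      _ = b - a := by field_simp

lemma l1 {a b : ℝ} (ha : 0 ≤ a) (hab : a ≤ b) :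
    |b * log b - a * log a| ≤ (b - a) * |log b| + (b - a) := by
  have key : b * log b - a * log a = (b - a) * log b + a * (log b - log a) := by ring
  calc |b * log b - a * log a| ≤ |(b-a) * log b| + |a * (log b - log a)| := by
        rw [key]; exact abs_add_le _ _
    _ ≤ (b - a) * |log b| + (b - a) := by
        rw [abs_mul, abs_of_nonneg (by linarith)]
        have := l0 ha hab
        linarith

lemma l2 {s t : ℝ} (hs : 0 ≤ s) (hst : s ≤ t) (ht : t ≤ 1) :
    s * (|log s| + 1) ≤ t * (|log t| + 1) := by
  rcases eq_or_lt_of_le hs with h|h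
  · rw [← h]; simp only [zero_mul]
    exact mul_nonneg (le_trans hs hst) (by positivity)
  · have htpos : 0 < t := lt_of_lt_of_le h hst
    have hls : log s ≤ 0 := Real.log_nonpos (le_of_lt h) (le_trans hst ht)
    have hlt : log t ≤ 0 := Real.log_nonpos (le_of_lt htpos) ht
    rw [abs_of_nonpos hls, abs_of_nonpos hlt]
    have h0 := l0 (le_of_lt h) hst
    rw [abs_le] at h0
    nlinarith [mul_nonneg (sub_nonneg.2 hst) (neg_nonneg.2 hlt)]

-- if 0 ≤ a ≤ b ≤ 1, b - a ≤ d ≤ 1 then ||b log b| - |a log a|| ≤ d(|log d|+1)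
lemma laux {a b d : ℝ} (ha : 0 ≤ a) (hab : a ≤ b) (hb : b ≤ 1) (hd1 : b - a ≤ d)
    (hd2 : d ≤ 1) :
    abs (|b * log b| - |a * log a|) ≤ d * (|log d| + 1) := by
  have hd0 : 0 ≤ d := le_trans (by linarith) hd1
  have step1 : abs (|b * log b| - |a * log a|) ≤ |b * log b - a * log a| :=
    abs_abs_sub_abs_le_abs_sub _ _
  have step2 := l1 ha hab
  rcases eq_or_lt_of_le hab with h|h
  · rw [← h]
    simp only [sub_self, abs_zero]
    exact mul_nonneg hd0 (by positivity)
  · have hba : 0 < b - a := by linarith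
    have hbpos : 0 < b := lt_of_le_of_lt ha h
    have hlb : |log b| ≤ |log (b - a)| := by
      have h1 : log (b-a) ≤ log b := Real.log_le_log hba (by linarith)
      have h2 : log b ≤ 0 := Real.log_nonpos (le_of_lt hbpos) hb
      rw [abs_of_nonpos h2, abs_of_nonpos (by linarith)]
      linarith
    have step3 : (b - a) * (|log b| + 1) ≤ (b - a) * (|log (b-a)| + 1) := by nlinarith
    have step4 : (b - a) * (|log (b-a)| + 1) ≤ d * (|log d| + 1) :=
      l2 (le_of_lt hba) hd1 hd2
    calc abs (|b * log b| - |a * log a|) ≤ |b * log b - a * log a| := step1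
      _ ≤ (b - a) * |log b| + (b - a) := step2
      _ = (b - a) * (|log b| + 1) := by ring
      _ ≤ d * (|log d| + 1) := le_trans step3 step4

-- f rewrite
lemma fabs (x : ℝ) : |x * log (abs x)| = |(abs x) * log (abs x)| := by
  rw [abs_mul, abs_mul, abs_abs]

lemma key {x y : ℝ} (hx : |x| ≤ 1) (hy : |y| ≤ 1) (hd : |x - y| ≤ 1) :
    abs (|x * log (abs x)| - |y * log (abs y)|) ≤ |x - y| * (|log (abs (x - y))| + 1) := by
  rcases le_total |y| |x| with h|h
  · have h2 := laux (abs_nonneg y) h hx (abs_sub_abs_le_abs_sub x y) hd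
    rw [fabs x, fabs y]
    exact h2
  · have hd2 : |y - x| ≤ 1 := by rw [abs_sub_comm]; exact hd
    have h2 := laux (abs_nonneg x) h hy (abs_sub_abs_le_abs_sub y x) hd2
    calc abs (|x * log (abs x)| - |y * log (abs y)|)
        = abs (|(abs y) * log (abs y)| - |(abs x) * log (abs x)|) := by
          rw [fabs x, fabs y, abs_sub_comm]
      _ ≤ |y - x| * (|log (abs (y - x))| + 1) := h2
      _ = |x - y| * (|log (abs (x - y))| + 1) := by rw [abs_sub_comm]

/-- The map `h(x) = (x, |x log|x||)` (with `h(0) = (0,0)`, since `Real.log 0 = 0`). -/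
noncomputable def hmap (x : ℝ) : ℝ × ℝ := (x, |x * Real.log (abs x)|)

/-- The curve `C̃ = {(x, |x log|x||)} ⊆ ℝ²`. -/
noncomputable def Ctilde : Set (ℝ × ℝ) := {p | p.2 = |p.1 * Real.log (abs p.1)|}

lemma log3_gt_one : (1:ℝ) < Real.log 3 := by
  have h : Real.exp 1 < 3 := by
    have := Real.exp_one_lt_d9
    linarith
  exact (Real.lt_log_iff_exp_lt (by norm_num)).2 h

lemma hmap_sub (x y : ℝ) :
    hmap x - hmap y = (x - y, |x * Real.log (abs x)| - |y * Real.log (abs y)|) := rfl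

lemma norm_hmap_sub (x y : ℝ) :
    ‖hmap x - hmap y‖
      = max (|x - y|) (abs (|x * Real.log (abs x)| - |y * Real.log (abs y)|)) := by
  rw [hmap_sub, Prod.norm_def, Real.norm_eq_abs, Real.norm_eq_abs]

/-- `h(x) = (x, |x log|x||)` is a homeomorphism of `ℝ` onto `C̃ = {(x, |x log|x||)}`
(its inverse being the first-coordinate projection, which is Lipschitz), `h` is
log-Lipschitz near `0`, and `h` is a bi-`α`-Hölder homeomorphism of germs
`(ℝ,0) → (C̃,0)` for every `α ∈ (0,1)`. -/
theorem hmap_biLogLipschitz :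
    Set.BijOn hmap Set.univ Ctilde ∧ Continuous hmap ∧
    (∀ p ∈ Ctilde, hmap p.1 = p) ∧
    (∃ δ > (0:ℝ), ∃ K > (0:ℝ), ∀ x y : ℝ, |x| < δ → |y| < δ → |x - y| < 1 →
      ‖hmap x - hmap y‖ ≤ K * |x - y| * |Real.log (abs (x - y))|) ∧
    (∀ p q : ℝ × ℝ, |p.1 - q.1| ≤ ‖p - q‖) ∧
    (∀ α : ℝ, 0 < α → α < 1 → ∃ δ > (0:ℝ), ∃ K > (0:ℝ), ∀ x y : ℝ, |x| < δ → |y| < δ →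
      ‖hmap x - hmap y‖ ≤ K * |x - y| ^ α ∧ |x - y| ≤ K * ‖hmap x - hmap y‖ ^ α) := by
  refine ⟨⟨fun x _ => rfl, fun x _ y _ h => congrArg Prod.fst h, fun p hp => ⟨p.1, Set.mem_univ _, Prod.ext rfl hp.symm⟩⟩, ?_, fun p hp => Prod.ext rfl hp.symm, ?_, ?_, ?_⟩
  · -- continuity
    have heq : (fun x : ℝ => |x * Real.log (abs x)|)
        = fun x => |(abs x) * Real.log (abs x)| := funext fabs
    unfold hmap
    exact continuous_id.prodMk (by
      rw [heq]; exact (Real.continuous_mul_log.comp continuous_abs).abs)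
  · -- log-Lipschitz
    refine ⟨1/6, by norm_num, 2, by norm_num, fun x y hx hy hxy => ?_⟩
    rcases eq_or_ne x y with rfl|hne
    · simp
    · set d := |x - y| with hdd
      have hd0 : 0 < d := abs_pos.2 (sub_ne_zero.2 hne)
      have hdlt : d < 1/3 := by
        calc d ≤ |x| + |y| := abs_sub x y
          _ < 1/3 := by linarith
      have hlogd : Real.log d < -1 := by
        have h1 : Real.log d < Real.log (1/3) := Real.log_lt_log hd0 (by linarith)
        have h2 : Real.log (1/3) = - Real.log 3 := by
          rw [one_div, Real.log_inv]
        have := log3_gt_one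
        linarith
      have habs : 1 ≤ |Real.log d| := by
        rw [abs_of_nonpos (by linarith)]; linarith
      have hkey := key (x := x) (y := y) (by linarith [abs_nonneg x])
        (by linarith [abs_nonneg y]) (le_of_lt hxy)
      rw [norm_hmap_sub]
      have hrhs : 2 * d * |Real.log d| = 2 * |x - y| * |Real.log (abs (x - y))| := rfl
      rw [← hrhs]
      refine max_le ?_ ?_
      · nlinarith
      · calc abs (|x * Real.log (abs x)| - |y * Real.log (abs y)|)
            ≤ d * (|Real.log d| + 1) := hkey
          _ ≤ 2 * d * |Real.log d| := by nlinarith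
  · -- projection Lipschitz
    intro p q
    simpa [Prod.fst_sub, Real.norm_eq_abs] using norm_fst_le (p - q)
  · -- Hölder
    intro α hα hα1
    have h1α : 0 < 1 - α := by linarith
    refine ⟨1/6, by norm_num, 2 + 2/(1-α), by positivity, fun x y hx hy => ?_⟩
    set K := 2 + 2/(1-α) with hK
    have hK1 : 1 ≤ K := by
      have h : 0 < 2/(1-α) := by positivity
      rw [hK]; linarith
    rcases eq_or_ne x y with rfl|hne
    · constructor
      · simp [Real.zero_rpow (ne_of_gt hα)]
      · simp
        positivity
    · set d := |x - y| with hdd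
      have hd0 : 0 < d := abs_pos.2 (sub_ne_zero.2 hne)
      have hdlt : d < 1/3 := by
        calc d ≤ |x| + |y| := abs_sub x y
          _ < 1/3 := by linarith
      have hd1 : d ≤ 1 := by linarith
      have hda : d ≤ d ^ α := by
        calc d = d ^ (1:ℝ) := (Real.rpow_one d).symm
          _ ≤ d ^ α := Real.rpow_le_rpow_of_exponent_ge hd0 hd1 (le_of_lt hα1)
      have hrpow0 : (0:ℝ) ≤ d ^ α := Real.rpow_nonneg hd0.le α
      -- d * |log d| ≤ d^α / (1-α)
      have hlog0 : Real.log d ≤ 0 := Real.log_nonpos hd0.le hd1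
      have hinv : Real.log (1/d) ≤ (1/d) ^ (1-α) / (1-α) :=
        Real.log_le_rpow_div (by positivity) h1α
      have hloginv : Real.log (1/d) = - Real.log d := by
        rw [one_div, Real.log_inv]
      have hinvpow : (1/d) ^ (1-α) = d ^ (α - 1) := by
        rw [one_div, ← Real.rpow_neg_one d, ← Real.rpow_mul hd0.le]
        congr 1; ring
      have hmul : d * (-Real.log d) ≤ d ^ α / (1-α) := by
        have h1 : -Real.log d ≤ d ^ (α-1) / (1-α) := by
          rw [← hloginv, ← hinvpow]; exact hinv
        have hsplit : d ^ (α - 1) * d = d ^ α := by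
          rw [← Real.rpow_add_one (ne_of_gt hd0) (α-1)]
          congr 1; ring
        have h2 : d * (d ^ (α-1) / (1-α)) = d ^ α / (1-α) := by
          rw [← hsplit]; ring
        calc d * (-Real.log d) ≤ d * (d ^ (α-1) / (1-α)) := by
              apply mul_le_mul_of_nonneg_left h1 hd0.le
          _ = d ^ α / (1-α) := h2
      have hfdiff := key (x := x) (y := y) (by linarith [abs_nonneg x])
        (by linarith [abs_nonneg y]) hd1
      have hN : |x - y| ≤ ‖hmap x - hmap y‖ := by
        rw [norm_hmap_sub]; exact le_max_left _ _
      have habslog : |Real.log (abs (x - y))| = -Real.log d := abs_of_nonpos hlog0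
      constructor
      · rw [norm_hmap_sub]
        refine max_le ?_ ?_
        · calc |x - y| ≤ d ^ α := hda
            _ ≤ K * d ^ α := le_mul_of_one_le_left hrpow0 hK1
        · calc abs (|x * Real.log (abs x)| - |y * Real.log (abs y)|)
              ≤ d * (|Real.log (abs (x - y))| + 1) := hfdiff
            _ = d * (-Real.log d) + d := by rw [habslog]; ring
            _ ≤ d ^ α / (1-α) + d ^ α := by linarith
            _ ≤ K * d ^ α := by
                rw [hK]
                have h3 : d ^ α / (1-α) ≤ (2/(1-α)) * d ^ α := by
                  rw [div_eq_mul_inv, mul_comm]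
                  have : (1-α)⁻¹ ≤ 2/(1-α) := by
                    rw [div_eq_mul_inv]
                    nlinarith [inv_pos.2 h1α]
                  nlinarith [inv_pos.2 h1α]
                nlinarith
      · have hNnn : (0:ℝ) ≤ ‖hmap x - hmap y‖ := norm_nonneg _
        have hNa : d ^ α ≤ ‖hmap x - hmap y‖ ^ α :=
          Real.rpow_le_rpow hd0.le hN hα.le
        have hNpow : (0:ℝ) ≤ ‖hmap x - hmap y‖ ^ α := Real.rpow_nonneg hNnn α
        calc |x - y| ≤ d ^ α := hda
          _ ≤ ‖hmap x - hmap y‖ ^ α := hNa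
          _ ≤ K * ‖hmap x - hmap y‖ ^ α := le_mul_of_one_le_left hNpow hK1
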